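/- There exists a history-deterministic coBüchi automaton with 61 states that recognises the complement Σ^ω ∖ L_main. -/

import Mathlib

/-- A (nondeterministic) Büchi/coBüchi automaton: an initial state, a set of
transitions, and a subset of *significant* transitions. -/
structure BuchiAutomaton (σ : Type) (Q : Type) where
  init : Q
  trans : Set (Q × σ × Q)
  sig : Set (Q × σ × Q)
  sig_sub : sig ⊆ trans

namespace BuchiAutomaton

variable {σ Q : Type}

/-- `ρ` is a run of `A` on the infinite word `w`, starting at the state `p`. -/
def IsRunFrom (A : BuchiAutomaton σ Q) (p : Q) (w : ℕ → σ) (ρ : ℕ → Q) : Prop :=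
  ρ 0 = p ∧ ∀ i, (ρ i, w i, ρ (i + 1)) ∈ A.trans

/-- Büchi acceptance: the run contains infinitely many significant transitions. -/
def BuchiAcc (A : BuchiAutomaton σ Q) (w : ℕ → σ) (ρ : ℕ → Q) : Prop :=
  ∀ N, ∃ i, N ≤ i ∧ (ρ i, w i, ρ (i + 1)) ∈ A.sig

/-- coBüchi acceptance: the run contains finitely many significant transitions. -/
def CoBuchiAcc (A : BuchiAutomaton σ Q) (w : ℕ → σ) (ρ : ℕ → Q) : Prop :=
  ∃ N, ∀ i, N ≤ i → (ρ i, w i, ρ (i + 1)) ∉ A.sig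

/-- The language of `A` (as a Büchi automaton), with initial state `p`. -/
def LangFrom (A : BuchiAutomaton σ Q) (p : Q) : Set (ℕ → σ) :=
  {w | ∃ ρ, A.IsRunFrom p w ρ ∧ A.BuchiAcc w ρ}

/-- The language of `A`, read as a Büchi automaton. -/
def Lang (A : BuchiAutomaton σ Q) : Set (ℕ → σ) :=
  A.LangFrom A.init

/-- The language of `A`, read as a coBüchi automaton. -/
def CoLang (A : BuchiAutomaton σ Q) : Set (ℕ → σ) :=
  {w | ∃ ρ, A.IsRunFrom A.init w ρ ∧ A.CoBuchiAcc w ρ}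

/-- `A` is deterministic: at most one outgoing transition per state and letter. -/
def Deterministic (A : BuchiAutomaton σ Q) : Prop :=
  ∀ p a q q', (p, a, q) ∈ A.trans → (p, a, q') ∈ A.trans → q = q'

/-- `FinRun A l p`: `l` is a finite run of `A` from the initial state, ending in
the state `p` (represented as the chronological list of its transitions). -/
inductive FinRun (A : BuchiAutomaton σ Q) : List (Q × σ × Q) → Q → Prop
  | nil : FinRun A [] A.init
  | snoc {l : List (Q × σ × Q)} {p : Q} {a : σ} {q : Q} :
      FinRun A l p → (p, a, q) ∈ A.trans → FinRun A (l ++ [(p, a, q)]) q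

/-- A resolver for `A`: a function from finite runs and letters to transitions,
such that on every finite run from the initial state ending in a state `p` and
every letter `a`, it outputs a transition on `a` with source `p`. -/
structure Resolver (A : BuchiAutomaton σ Q) where
  res : List (Q × σ × Q) → σ → Q × σ × Q
  res_valid : ∀ l p a, A.FinRun l p →
    (res l a).1 = p ∧ (res l a).2.1 = a ∧ res l a ∈ A.trans

/-- The history (finite run) built by a resolver after reading `n` letters of `w`. -/
def Resolver.hist {A : BuchiAutomaton σ Q} (r : Resolver A) (w : ℕ → σ) : ℕ → List (Q × σ × Q)
  | 0 => []
  | n + 1 => r.hist w n ++ [r.res (r.hist w n) (w n)]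

/-- The run induced by the resolver on `w` satisfies the Büchi condition. -/
def Resolver.InducedBuchiAcc {A : BuchiAutomaton σ Q} (r : Resolver A) (w : ℕ → σ) : Prop :=
  ∀ N, ∃ n, N ≤ n ∧ r.res (r.hist w n) (w n) ∈ A.sig

/-- The run induced by the resolver on `w` satisfies the coBüchi condition. -/
def Resolver.InducedCoBuchiAcc {A : BuchiAutomaton σ Q} (r : Resolver A) (w : ℕ → σ) : Prop :=
  ∃ N, ∀ n, N ≤ n → r.res (r.hist w n) (w n) ∉ A.sig

/-- `A` is history-deterministic (as a Büchi automaton). -/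
def HistoryDeterministic (A : BuchiAutomaton σ Q) : Prop :=
  ∃ r : Resolver A, ∀ w ∈ A.Lang, r.InducedBuchiAcc w

/-- `A` is history-deterministic (as a coBüchi automaton). -/
def CoHistoryDeterministic (A : BuchiAutomaton σ Q) : Prop :=
  ∃ r : Resolver A, ∀ w ∈ A.CoLang, r.InducedCoBuchiAcc w

end BuchiAutomaton

/-- The finite factor `w[m..n)` of the infinite word `w`, as a list. -/
def wordSegment {σ : Type} (w : ℕ → σ) (m n : ℕ) : List σ :=
  (List.range (n - m)).map fun i => w (m + i)

/-- `omegaPow X`: the infinite words that can be written as an infinite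
concatenation of finite words, each belonging to `X`. -/
def omegaPow {σ : Type} (X : Set (List σ)) : Set (ℕ → σ) :=
  {w | ∃ φ : ℕ → ℕ, φ 0 = 0 ∧ StrictMono φ ∧ ∀ k, wordSegment w (φ k) (φ (k + 1)) ∈ X}

/-- The alphabet `Σ = {a, b, c, 1, …, 6, r₁, …, r₆, y}` (with `num i` the digit
`i+1` and `res i` the reset letter `r_{i+1}`). -/
inductive Al : Type
  | a | b | c
  | num (i : Fin 6)
  | res (i : Fin 6)
  | y
deriving DecidableEq, Fintype

/-- The states of the classifier DFA. -/
inductive CSt : Type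
  | p | q | t | s | r
  | ell (i : Fin 6)
deriving DecidableEq, Fintype

/-- The (partial) transition function of the classifier. A digit `num i` belongs
to `E = {1,2,3}` iff `i.val < 3`, and to `F = {4,5,6}` otherwise. -/
def clStep : CSt → Al → Option CSt
  | .p, .b => some .p
  | .p, .num _ => some .p
  | .p, .y => some .p
  | .p, .a => some .q
  | .p, .c => some .t
  | .q, .a => some .q
  | .q, .num _ => some .p
  | .q, .y => some .p
  | .q, .b => some .r
  | .q, .c => some .s
  | .t, .c => some .t
  | .t, .b => some .p
  | .t, .a => some .q
  | .t, .num i => if i.val < 3 then some (.ell i) else some .p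
  | .t, .y => some .p
  | .s, .c => some .s
  | .s, .b => some .r
  | .s, .a => some .q
  | .s, .num i => if i.val < 3 then some (.ell i) else some .p
  | .s, .y => some .p
  | .r, .b => some .r
  | .r, .a => some .q
  | .r, .c => some .s
  | .r, .num i => if 3 ≤ i.val then some (.ell i) else some .p
  | .r, .y => some .p
  | _, _ => none

/-- The run of the classifier on a finite word, from a given state. -/
def clRun : CSt → List Al → Option CSt
  | c, [] => some c
  | c, l :: w =>
    match clStep c l with
    | some c' => clRun c' w
    | none => none

/-- The language `L_α` (for `α : Fin 6`, representing `L_{α+1}`): the finite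
words whose run in the classifier from `p` is defined and ends in `ℓ_α`. -/
def Lcl (α : Fin 6) : Set (List Al) :=
  {w | clRun .p w = some (.ell α)}

/-- `L_main = (Σ^* ⋃_{α≠β} (L_α ∪ {r_α}) L_β L_β Σ^* y)^ω`. -/
def LMain : Set (ℕ → Al) :=
  omegaPow {w | ∃ α β : Fin 6, α ≠ β ∧ ∃ u v₁ v₂ v₃ z : List Al,
    (v₁ ∈ Lcl α ∨ v₁ = [Al.res α]) ∧ v₂ ∈ Lcl β ∧ v₃ ∈ Lcl β ∧
    w = u ++ v₁ ++ v₂ ++ v₃ ++ z ++ [Al.y]}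

/-! ### Auxiliary development -/

inductive T5 : Type
  | P | Q | T | S | R
deriving DecidableEq

instance : Fintype T5 := Fintype.ofList [.P, .Q, .T, .S, .R] (fun x => by cases x <;> simp)

inductive St : Type
  | W
  | M (σ : T5) (γ : Fin 6) (f : Bool)
deriving DecidableEq, Fintype

def ι : T5 → CSt
  | .P => .p | .Q => .q | .T => .t | .S => .s | .R => .r

def trig : T5 → Fin 6 → Bool
  | .T, d => decide (d.val < 3)
  | .S, d => decide (d.val < 3)
  | .R, d => decide (3 ≤ d.val)
  | _, _ => false

def tstep : T5 → Al → T5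
  | _, .a => .Q
  | σ, .b => match σ with | .P => .P | .T => .P | _ => .R
  | σ, .c => match σ with | .P => .T | .T => .T | _ => .S
  | _, _ => .P

lemma card_St : Fintype.card St = 61 := by decide

lemma clStep_res (σ : T5) (e : Fin 6) : clStep (ι σ) (.res e) = none := by
  cases σ <;> rfl

lemma clStep_num (σ : T5) (d : Fin 6) :
    clStep (ι σ) (.num d) = some (if trig σ d then .ell d else .p) := by
  cases σ <;> simp [ι, trig, clStep] <;> split <;> simp_all <;> omega

lemma clStep_other (σ : T5) (l : Al) (h : ∀ d, l ≠ .num d) (h2 : ∀ d, l ≠ .res d) :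
    clStep (ι σ) l = some (ι (tstep σ l)) := by
  cases σ <;> cases l <;> first | rfl | (exfalso; exact h _ rfl) | (exfalso; exact h2 _ rfl)

lemma tstep_num (σ : T5) (d : Fin 6) : tstep σ (.num d) = .P := by cases σ <;> rfl
lemma tstep_res (σ : T5) (d : Fin 6) : tstep σ (.res d) = .P := by cases σ <;> rfl
lemma tstep_y (σ : T5) : tstep σ .y = .P := by cases σ <;> rfl

lemma clStep_ell (d : Fin 6) (l : Al) : clStep (.ell d) l = none := by cases l <;> rfl
/-! ### word-level notions -/

variable {w : ℕ → Al}

/-- classifier state after reading `k` letters starting at position `m`. -/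
def prf (w : ℕ → Al) (m : ℕ) : ℕ → Option CSt
  | 0 => some .p
  | k+1 => (prf w m k).bind (fun s => clStep s (w (m+k)))

/-- global tracker -/
def trk (w : ℕ → Al) : ℕ → T5
  | 0 => .P
  | i+1 => tstep (trk w i) (w i)

/-- event at position i, with label -/
def evt (w : ℕ → Al) (i : ℕ) : Option (Fin 6) :=
  match w i with
  | .res e => some e
  | .num d => if trig (trk w i) d then some d else none
  | _ => none

lemma prf_none_mono {m j k : ℕ} (h : prf w m j = none) (hjk : j ≤ k) :
    prf w m k = none := by
  induction k with
  | zero => have : j = 0 := by omega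
            rw [this] at h; exact h
  | succ k ih =>
    rcases Nat.lt_or_ge j (k+1) with hl | hg
    · have := ih (by omega)
      simp [prf, this]
    · have : j = k + 1 := by omega
      rw [this] at h; exact h

lemma prf_alive {m j k : ℕ} {x} (h : prf w m k = some x) (hjk : j ≤ k) :
    ∃ y, prf w m j = some y := by
  cases hj : prf w m j with
  | none => rw [prf_none_mono hj hjk] at h; exact absurd h (by simp)
  | some z => exact ⟨z, rfl⟩

lemma evt_trk_P {i : ℕ} {d : Fin 6} (h : evt w i = some d) : trk w (i+1) = .P := by
  unfold evt at h
  unfold trk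
  cases hw : w i <;> rw [hw] at h <;> simp_all <;>
    first | rw [tstep_num] | rw [tstep_res]

/-- the Srel relation, as a Bool -/
def srel : CSt → T5 → Bool
  | x, τ => (x == ι τ) || (x == .p) || ((x == .t) && ((τ == .T) || (τ == .S)))

lemma srel_close : ∀ (x : CSt) (τ : T5) (l : Al) (y : CSt),
    srel x τ = true → clStep x l = some y →
    (∃ d, y = .ell d) ∨ srel y (tstep τ l) = true := by decide

lemma srel_trig : ∀ (x : CSt) (τ : T5) (l : Al) (α : Fin 6),
    srel x τ = true → clStep x l = some (.ell α) →
    l = .num α ∧ trig τ α = true := by decide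

/-- states reached by `prf` before hitting some `ell` are `srel`-related to the tracker -/
lemma prf_srel {m : ℕ} : ∀ {j : ℕ} {x : CSt}, prf w m j = some x →
    (∃ d, x = .ell d) ∨ srel x (trk w (m+j)) = true := by
  intro j
  induction j with
  | zero => intro x h
            right
            simp [prf] at h
            subst h; simp [srel]
  | succ j ih =>
    intro x h
    simp only [prf, Option.bind_eq_some_iff] at h
    obtain ⟨x', hx', hstep⟩ := h
    rcases ih hx' with ⟨d, rfl⟩ | hs
    · rw [clStep_ell] at hstep; exact absurd hstep (by simp)
    · have := srel_close x' (trk w (m+j)) (w (m+j)) x hs hstep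
      rcases this with h1 | h2
      · exact Or.inl h1
      · right
        have : m + (j+1) = (m+j) + 1 := by omega
        rw [this]
        simpa [trk] using h2

/-- A completed classifier piece ending at position `m+k` yields an event there. -/
lemma completion_evt {m k : ℕ} {α : Fin 6} (h : prf w m (k+1) = some (.ell α)) :
    evt w (m+k) = some α ∧ w (m+k) = .num α := by
  simp only [prf, Option.bind_eq_some_iff] at h
  obtain ⟨x, hx, hstep⟩ := h
  rcases prf_srel hx with ⟨d, rfl⟩ | hs
  · rw [clStep_ell] at hstep; exact absurd hstep (by simp)
  · obtain ⟨hl, ht⟩ := srel_trig x (trk w (m+k)) (w (m+k)) α hs hstep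
    refine ⟨?_, hl⟩
    unfold evt
    rw [hl]; simp [ht]
lemma trk_succ (i : ℕ) : trk w (i+1) = tstep (trk w i) (w i) := rfl

lemma prf_succ (m k : ℕ) : prf w m (k+1) = (prf w m k).bind (fun s => clStep s (w (m+k))) := rfl

lemma evt_none_of_other {i : ℕ} (h : ∀ d, w i ≠ .num d) (h2 : ∀ d, w i ≠ .res d) :
    evt w i = none := by
  unfold evt
  cases hw : w i
  · rfl
  · rfl
  · rfl
  · exact absurd hw (h _)
  · exact absurd hw (h2 _)
  · rfl

lemma evt_none_num {i : ℕ} {d : Fin 6} (h : w i = .num d) (ht : ¬ trig (trk w i) d = true) :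
    evt w i = none := by
  unfold evt; rw [h]; simp [ht]

lemma evt_some_num {i : ℕ} {d : Fin 6} (h : w i = .num d) (ht : trig (trk w i) d = true) :
    evt w i = some d := by
  unfold evt; rw [h]; simp [ht]

lemma evt_some_res {i : ℕ} {d : Fin 6} (h : w i = .res d) : evt w i = some d := by
  unfold evt; rw [h]

lemma vrun_fwd {a k : ℕ} {β : Fin 6} (ha : trk w a = T5.P)
    (h : prf w a k = some (.ell β)) :
    0 < k ∧ (∀ j, j + 1 < k → evt w (a+j) = none) ∧
      w (a+(k-1)) = .num β ∧ trig (trk w (a+(k-1))) β = true := by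
  have hk : 0 < k := by
    cases k with
    | zero => simp [prf] at h
    | succ k => omega
  have hnell : ∀ j d, j < k → prf w a j ≠ some (.ell d) := by
    intro j d hj hc
    have h1 : prf w a (j+1) = none := by simp [prf_succ, hc, clStep_ell]
    have h2 := prf_none_mono h1 (by omega : j+1 ≤ k)
    rw [h2] at h; cases h
  have heq : ∀ j, j < k → prf w a j = some (ι (trk w (a+j))) := by
    intro j
    induction j with
    | zero =>
      intro _
      rw [Nat.add_zero, ha]; rfl
    | succ j ih =>
      intro hj
      have hx := ih (by omega)
      obtain ⟨y, hy⟩ := prf_alive h (by omega : j+1 ≤ k)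
      have hy' : clStep (ι (trk w (a+j))) (w (a+j)) = some y := by
        rw [prf_succ, hx] at hy; simpa using hy
      have hstep : y = ι (trk w (a+(j+1))) := by
        have harith : a + (j+1) = (a+j) + 1 := by omega
        rw [harith, trk_succ]
        cases hw : w (a+j) with
        | res e => rw [hw, clStep_res] at hy'; cases hy'
        | num d =>
          rw [hw, clStep_num] at hy'
          by_cases htr : trig (trk w (a+j)) d = true
          · rw [if_pos htr] at hy'
            exact absurd hy (by rw [← Option.some_inj.mp hy']; exact hnell _ _ hj)
          · rw [if_neg htr] at hy'
            rw [tstep_num]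
            exact (Option.some_inj.mp hy').symm
        | y =>
          rw [hw, clStep_other _ _ (by simp) (by simp)] at hy'
          exact (Option.some_inj.mp hy').symm
        | a =>
          rw [hw, clStep_other _ _ (by simp) (by simp)] at hy'
          exact (Option.some_inj.mp hy').symm
        | b =>
          rw [hw, clStep_other _ _ (by simp) (by simp)] at hy'
          exact (Option.some_inj.mp hy').symm
        | c =>
          rw [hw, clStep_other _ _ (by simp) (by simp)] at hy'
          exact (Option.some_inj.mp hy').symm
      rw [hy, hstep]
  have hlast : clStep (ι (trk w (a+(k-1)))) (w (a+(k-1))) = some (.ell β) := by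
    have h1 : prf w a ((k-1)+1) = some (.ell β) := by
      have : (k-1)+1 = k := by omega
      rw [this]; exact h
    rw [prf_succ, heq (k-1) (by omega)] at h1
    simpa using h1
  have hfin : w (a+(k-1)) = .num β ∧ trig (trk w (a+(k-1))) β = true := by
    cases hw : w (a+(k-1)) with
    | res e => rw [hw, clStep_res] at hlast; cases hlast
    | num d =>
      rw [hw, clStep_num] at hlast
      by_cases htr : trig (trk w (a+(k-1))) d = true
      · rw [if_pos htr] at hlast
        have hdβ : d = β := by simpa using hlast
        subst hdβ
        exact ⟨rfl, htr⟩
      · rw [if_neg htr] at hlast; cases Option.some_inj.mp hlast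
    | y => rw [hw, clStep_other _ _ (by simp) (by simp)] at hlast
           cases σ' : tstep (trk w (a+(k-1))) Al.y <;> rw [σ'] at hlast <;> cases Option.some_inj.mp hlast
    | a => rw [hw, clStep_other _ _ (by simp) (by simp)] at hlast
           cases σ' : tstep (trk w (a+(k-1))) Al.a <;> rw [σ'] at hlast <;> cases Option.some_inj.mp hlast
    | b => rw [hw, clStep_other _ _ (by simp) (by simp)] at hlast
           cases σ' : tstep (trk w (a+(k-1))) Al.b <;> rw [σ'] at hlast <;> cases Option.some_inj.mp hlast
    | c => rw [hw, clStep_other _ _ (by simp) (by simp)] at hlast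
           cases σ' : tstep (trk w (a+(k-1))) Al.c <;> rw [σ'] at hlast <;> cases Option.some_inj.mp hlast
  refine ⟨hk, ?_, hfin.1, hfin.2⟩
  intro j hj
  have hx := heq j (by omega)
  obtain ⟨y, hy⟩ := prf_alive h (by omega : j+1 ≤ k)
  have hy' : clStep (ι (trk w (a+j))) (w (a+j)) = some y := by
    rw [prf_succ, hx] at hy; simpa using hy
  cases hw : w (a+j) with
  | res e => rw [hw, clStep_res] at hy'; cases hy'
  | num d =>
    rw [hw, clStep_num] at hy'
    by_cases htr : trig (trk w (a+j)) d = true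
    · rw [if_pos htr] at hy'
      exact absurd hy (by rw [← Option.some_inj.mp hy']; exact hnell _ _ (by omega))
    · exact evt_none_num hw htr
  | y => exact evt_none_of_other (by simp [hw]) (by simp [hw])
  | a => exact evt_none_of_other (by simp [hw]) (by simp [hw])
  | b => exact evt_none_of_other (by simp [hw]) (by simp [hw])
  | c => exact evt_none_of_other (by simp [hw]) (by simp [hw])
lemma vrun_bwd {a k : ℕ} {β : Fin 6} (ha : trk w a = T5.P) (hk : 0 < k)
    (hne : ∀ j, j + 1 < k → evt w (a+j) = none)
    (hnum : w (a+(k-1)) = .num β) (htr : trig (trk w (a+(k-1))) β = true) :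
    prf w a k = some (.ell β) := by
  have heq : ∀ j, j < k → prf w a j = some (ι (trk w (a+j))) := by
    intro j
    induction j with
    | zero => intro _; rw [Nat.add_zero, ha]; rfl
    | succ j ih =>
      intro hj
      have hx := ih (by omega)
      have harith : a + (j+1) = (a+j) + 1 := by omega
      rw [prf_succ, hx, Option.bind_some, harith, trk_succ]
      have hev := hne j (by omega)
      cases hw : w (a+j) with
      | res e => rw [evt_some_res hw] at hev; cases hev
      | num d =>
        have htr' : ¬ trig (trk w (a+j)) d = true := by
          intro hc
          rw [evt_some_num hw hc] at hev; cases hev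
        rw [clStep_num, if_neg htr', tstep_num]; rfl
      | y => rw [clStep_other _ _ (by simp) (by simp)]
      | a => rw [clStep_other _ _ (by simp) (by simp)]
      | b => rw [clStep_other _ _ (by simp) (by simp)]
      | c => rw [clStep_other _ _ (by simp) (by simp)]
  have h1 : prf w a ((k-1)+1) = some (.ell β) := by
    rw [prf_succ, heq (k-1) (by omega), Option.bind_some, hnum, clStep_num, if_pos htr]
  have : (k-1)+1 = k := by omega
  rwa [this] at h1

def isRst : Al → Bool
  | .y => true
  | .num _ => true
  | .res _ => true
  | _ => false

lemma canon (w : ℕ → Al) : ∀ i : ℕ, ∃ m, m ≤ i ∧ prf w m (i-m) = some (ι (trk w i)) ∧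
    ∀ j, j < i → isRst (w j) = true → j < m := by
  intro i
  induction i with
  | zero => exact ⟨0, le_refl _, rfl, fun j hj _ => absurd hj (Nat.not_lt_zero j)⟩
  | succ i ih =>
    obtain ⟨m, hm, hpr, hrst⟩ := ih
    by_cases hr : isRst (w i) = true
    · refine ⟨i+1, le_refl _, ?_, by omega⟩
      simp only [Nat.sub_self]
      rw [trk_succ]
      cases hw : w i with
      | num d => rw [tstep_num]; rfl
      | res d => rw [tstep_res]; rfl
      | y => rw [tstep_y]; rfl
      | a => exact absurd hr (by rw [hw]; simp [isRst])
      | b => exact absurd hr (by rw [hw]; simp [isRst])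
      | c => exact absurd hr (by rw [hw]; simp [isRst])
    · refine ⟨m, by omega, ?_, ?_⟩
      · have harith : i + 1 - m = (i - m) + 1 := by omega
        have harith2 : m + (i - m) = i := by omega
        rw [harith, prf_succ, hpr, Option.bind_some, harith2, trk_succ]
        cases hw : w i with
        | num d => exact absurd (by simp [hw, isRst] : isRst (w i) = true) hr
        | res d => exact absurd (by simp [hw, isRst] : isRst (w i) = true) hr
        | y => exact absurd (by simp [hw, isRst] : isRst (w i) = true) hr
        | a => rw [clStep_other _ _ (by simp) (by simp)]
        | b => rw [clStep_other _ _ (by simp) (by simp)]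
        | c => rw [clStep_other _ _ (by simp) (by simp)]
      · intro j hj hrj
        rcases Nat.lt_or_ge j i with h1 | h1
        · exact hrst j h1 hrj
        · have : j = i := by omega
          rw [this] at hrj; exact absurd hrj hr
/-! ### the automaton -/

def dstep : St → Al → St
  | .W, _ => .W
  | .M σ γ f, l =>
    match l with
    | .num d => if trig σ d then (if f = true ∧ γ = d then .W else .M .P d (decide (γ ≠ d)))
                else .M .P γ f
    | .res e => .M .P e false
    | _ => .M (tstep σ l) γ f

def Atrans : Set (St × Al × St) :=
  {x | if x.1 = .W ∧ x.2.1 = .y then (∃ γ, x.2.2 = .M .P γ false) else x.2.2 = dstep x.1 x.2.1}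

def Asig : Set (St × Al × St) :=
  {x | x.1 = .W ∧ x.2.1 = .y ∧ ∃ γ, x.2.2 = .M .P γ false}

lemma Asig_sub : Asig ⊆ Atrans := by
  intro x hx
  obtain ⟨h1, h2, h3⟩ := hx
  simp only [Atrans, Set.mem_setOf_eq, if_pos (⟨h1, h2⟩ : x.1 = .W ∧ x.2.1 = .y)]
  exact h3

def theA : BuchiAutomaton Al St := ⟨.W, Atrans, Asig, Asig_sub⟩

lemma mem_Atrans_iff {x : St × Al × St} :
    x ∈ Atrans ↔ ((x.1 = .W ∧ x.2.1 = .y ∧ ∃ γ, x.2.2 = .M .P γ false) ∨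
      (¬(x.1 = .W ∧ x.2.1 = .y) ∧ x.2.2 = dstep x.1 x.2.1)) := by
  simp only [Atrans, Set.mem_setOf_eq]
  by_cases h : x.1 = .W ∧ x.2.1 = .y
  · simp [h]
  · rw [if_neg h]
    constructor
    · intro hx; exact Or.inr ⟨h, hx⟩
    · rintro (⟨h1, h2, _⟩ | ⟨_, hx⟩)
      · exact absurd ⟨h1, h2⟩ h
      · exact hx

lemma mem_Asig_iff {x : St × Al × St} :
    x ∈ Asig ↔ (x.1 = .W ∧ x.2.1 = .y ∧ ∃ γ, x.2.2 = .M .P γ false) := Iff.rfl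

section Run

variable {ρ : ℕ → St}

/-- basic step analysis -/
lemma rstep (hρ : ∀ i, (ρ i, w i, ρ (i+1)) ∈ Atrans) (i : ℕ) :
    (ρ i = .W ∧ w i = .y ∧ ∃ γ, ρ (i+1) = .M .P γ false) ∨
      (¬(ρ i = .W ∧ w i = .y) ∧ ρ (i+1) = dstep (ρ i) (w i)) := by
  have := (mem_Atrans_iff).mp (hρ i)
  simpa using this

lemma runform (hρ : ∀ i, (ρ i, w i, ρ (i+1)) ∈ Atrans) (h0 : ρ 0 = .W) : ∀ i, ρ i = .W ∨ ∃ γ f, ρ i = .M (trk w i) γ f := by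
  intro i
  induction i with
  | zero => exact Or.inl h0
  | succ i ih =>
    rcases rstep hρ i with ⟨hW, hy, γ, hn⟩ | ⟨hne, hn⟩
    · right
      refine ⟨γ, false, ?_⟩
      rw [hn, trk_succ, hy, tstep_y]
    · rcases ih with hW | ⟨γ, f, hM⟩
      · left
        rw [hn, hW]
        cases hw : w i <;> rfl
      · rw [hM] at hn
        rw [trk_succ]
        cases hw : w i with
        | num d =>
          rw [tstep_num]
          by_cases htr : trig (trk w i) d = true
          · by_cases hdecl : f = true ∧ γ = d
            · left; rw [hn, hw]; simp [dstep, htr, hdecl]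
            · right; exact ⟨d, decide (γ ≠ d), by rw [hn, hw]; simp [dstep, htr, hdecl]⟩
          · right; exact ⟨γ, f, by rw [hn, hw]; simp [dstep, htr]⟩
        | res e => right; exact ⟨e, false, by rw [hn, hw, tstep_res]; rfl⟩
        | y => right; exact ⟨γ, f, by rw [hn, hw, tstep_y]; rfl⟩
        | a => right; exact ⟨γ, f, by rw [hn, hw]; rfl⟩
        | b => right; exact ⟨γ, f, by rw [hn, hw]; rfl⟩
        | c => right; exact ⟨γ, f, by rw [hn, hw]; rfl⟩

/-- no event: the monitor keeps its registers -/
lemma span (hρ : ∀ i, (ρ i, w i, ρ (i+1)) ∈ Atrans) {γ : Fin 6} {f : Bool} : ∀ {a b : ℕ}, a ≤ b → ρ a = .M (trk w a) γ f →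
    (∀ i, a ≤ i → i < b → evt w i = none) → ρ b = .M (trk w b) γ f := by
  intro a b
  induction b with
  | zero => intro hab h _; have : a = 0 := by omega
            rw [← this]; exact h
  | succ b ih =>
    intro hab h hne
    rcases Nat.lt_or_ge a (b+1) with hl | hg
    · have hb := ih (by omega) h (fun i h1 h2 => hne i h1 (by omega))
      have hev := hne b (by omega) (by omega)
      rcases rstep hρ b with ⟨hW, _, _⟩ | ⟨_, hn⟩
      · rw [hb] at hW; cases hW
      · rw [hb] at hn
        rw [hn, trk_succ]
        cases hw : w b with
        | num d =>
          have htr : ¬ trig (trk w b) d = true := fun hc => by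
            rw [evt_some_num hw hc] at hev; cases hev
          rw [tstep_num]; simp [dstep, htr]
        | res e => rw [evt_some_res hw] at hev; cases hev
        | y => rw [tstep_y]; rfl
        | a => rfl
        | b => rfl
        | c => rfl
    · have : a = b + 1 := by omega
      rw [← this]; exact h

/-- event step -/
lemma evstep (hρ : ∀ i, (ρ i, w i, ρ (i+1)) ∈ Atrans) {γ : Fin 6} {f : Bool} {i : ℕ} {d : Fin 6} (h : ρ i = .M (trk w i) γ f)
    (hev : evt w i = some d) :
    (w i = .num d ∧ trig (trk w i) d = true ∧
      ((f = true ∧ γ = d ∧ ρ (i+1) = .W) ∨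
       (¬(f = true ∧ γ = d) ∧ ρ (i+1) = .M .P d (decide (γ ≠ d))))) ∨
    (w i = .res d ∧ ρ (i+1) = .M .P d false) := by
  rcases rstep hρ i with ⟨hW, _, _⟩ | ⟨_, hn⟩
  · rw [h] at hW; cases hW
  · rw [h] at hn
    cases hw : w i with
    | num d' =>
      by_cases htr : trig (trk w i) d' = true
      · have hdd : d' = d := by rw [evt_some_num hw htr] at hev; simpa using hev
        subst hdd
        left
        refine ⟨rfl, htr, ?_⟩
        by_cases hdecl : f = true ∧ γ = d'
        · exact Or.inl ⟨hdecl.1, hdecl.2, by rw [hn, hw]; simp [dstep, htr, hdecl]⟩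
        · exact Or.inr ⟨hdecl, by rw [hn, hw]; simp [dstep, htr, hdecl]⟩
      · rw [evt_none_num hw htr] at hev; cases hev
    | res e =>
      have hdd : e = d := by rw [evt_some_res hw] at hev; simpa using hev
      subst hdd
      right
      exact ⟨rfl, by rw [hn, hw]; rfl⟩
    | y => rw [evt_none_of_other (by simp [hw]) (by simp [hw])] at hev; cases hev
    | a => rw [evt_none_of_other (by simp [hw]) (by simp [hw])] at hev; cases hev
    | b => rw [evt_none_of_other (by simp [hw]) (by simp [hw])] at hev; cases hev
    | c => rw [evt_none_of_other (by simp [hw]) (by simp [hw])] at hev; cases hev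

/-- a transition from M to W is a "declare": it analyses to an event with matching registers -/
lemma decl (hρ : ∀ i, (ρ i, w i, ρ (i+1)) ∈ Atrans) {σ : T5} {γ : Fin 6} {f : Bool} {i : ℕ} (h : ρ i = .M σ γ f) (h' : ρ (i+1) = .W) :
    w i = .num γ ∧ trig σ γ = true ∧ f = true := by
  rcases rstep hρ i with ⟨hW, _, _⟩ | ⟨_, hn⟩
  · rw [h] at hW; cases hW
  · rw [h] at hn; rw [h'] at hn
    cases hw : w i with
    | num d =>
      rw [hw] at hn
      by_cases htr : trig σ d = true
      · by_cases hdecl : f = true ∧ γ = d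
        · rw [hdecl.2]; exact ⟨rfl, hdecl.2 ▸ htr, hdecl.1⟩
        · simp [dstep, htr, hdecl] at hn
      · simp [dstep, htr] at hn
    | res e => rw [hw] at hn; simp [dstep] at hn
    | y => rw [hw] at hn; simp [dstep] at hn
    | a => rw [hw] at hn; simp [dstep] at hn
    | b => rw [hw] at hn; simp [dstep] at hn
    | c => rw [hw] at hn; simp [dstep] at hn

/-- W persists as long as no sig transition occurs -/
lemma wpersist (hρ : ∀ i, (ρ i, w i, ρ (i+1)) ∈ Atrans) : ∀ {a b : ℕ}, a ≤ b → ρ a = .W →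
    (∀ i, a ≤ i → i < b → (ρ i, w i, ρ (i+1)) ∉ Asig) → ρ b = .W := by
  intro a b
  induction b with
  | zero => intro hab h _; have : a = 0 := by omega
            rw [← this]; exact h
  | succ b ih =>
    intro hab h hns
    rcases Nat.lt_or_ge a (b+1) with hl | hg
    · have hb := ih (by omega) h (fun i h1 h2 => hns i h1 (by omega))
      rcases rstep hρ b with ⟨hW, hy, γ, hn⟩ | ⟨_, hn⟩
      · exact absurd ⟨hW, hy, γ, hn⟩ (hns b (by omega) (by omega))
      · rw [hn, hb]
        cases hw : w b <;> rfl
    · have : a = b + 1 := by omega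
      rw [← this]; exact h

/-- W persists until the next y -/
lemma wstay (hρ : ∀ i, (ρ i, w i, ρ (i+1)) ∈ Atrans) : ∀ {a b : ℕ}, a ≤ b → ρ a = .W → (∀ i, a ≤ i → i < b → w i ≠ .y) → ρ b = .W := by
  intro a b
  induction b with
  | zero => intro hab h _; have : a = 0 := by omega
            rw [← this]; exact h
  | succ b ih =>
    intro hab h hny
    rcases Nat.lt_or_ge a (b+1) with hl | hg
    · have hb := ih (by omega) h (fun i h1 h2 => hny i h1 (by omega))
      rcases rstep hρ b with ⟨_, hy, _⟩ | ⟨_, hn⟩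
      · exact absurd hy (hny b (by omega) (by omega))
      · rw [hn, hb]
        cases hw : w b <;> rfl
    · have : a = b + 1 := by omega
      rw [← this]; exact h

/-- first entry into W -/
lemma firstW {a b : ℕ} (hab : a ≤ b) (ha : ρ a ≠ .W) (hb : ρ b = .W) :
    ∃ e, a ≤ e ∧ e < b ∧ ρ (e+1) = .W ∧ ∀ i, a ≤ i → i ≤ e → ρ i ≠ .W := by
  have hex : ∃ j, a ≤ j ∧ ρ j = .W := ⟨b, hab, hb⟩
  classical
  let j := Nat.find hex
  have hj : a ≤ j ∧ ρ j = .W := Nat.find_spec hex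
  have hja : a < j := by
    rcases Nat.lt_or_ge a j with h | h
    · exact h
    · have : j = a := by omega
      exact absurd (this ▸ hj.2) ha
  refine ⟨j - 1, by omega, ?_, ?_, ?_⟩
  · have : j ≤ b := Nat.find_le ⟨hab, hb⟩
    omega
  · have : j - 1 + 1 = j := by omega
    rw [this]; exact hj.2
  · intro i h1 h2 hc
    have := Nat.find_min hex (m := i) (by omega)
    exact this ⟨h1, hc⟩

end Run
/-! ### the resolver -/

def endSt (l : List (St × Al × St)) : St := (l.getLast?).elim St.W (·.2.2)

def gcA : T5 × Fin 6 → Al → T5 × Fin 6 := fun p l =>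
  (tstep p.1 l, match l with
    | .res e => e
    | .num d => if trig p.1 d then d else p.2
    | _ => p.2)

def gc (ls : List Al) : Fin 6 := (ls.foldl gcA (.P, 0)).2

def resFun (l : List (St × Al × St)) (a : Al) : St × Al × St :=
  if endSt l = .W ∧ a = .y then (endSt l, a, .M .P (gc (l.map (·.2.1))) false)
  else (endSt l, a, dstep (endSt l) a)

lemma resFun_fst (l : List (St × Al × St)) (a : Al) : (resFun l a).1 = endSt l := by
  unfold resFun; split <;> rfl

lemma resFun_snd (l : List (St × Al × St)) (a : Al) : (resFun l a).2.1 = a := by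
  unfold resFun; split <;> rfl

lemma resFun_mem (l : List (St × Al × St)) (a : Al) : resFun l a ∈ Atrans := by
  rw [mem_Atrans_iff]
  unfold resFun
  by_cases h : endSt l = .W ∧ a = .y
  · rw [if_pos h]
    exact Or.inl ⟨h.1, h.2, _, rfl⟩
  · rw [if_neg h]
    refine Or.inr ⟨?_, rfl⟩
    simpa using h

lemma endSt_finrun {l : List (St × Al × St)} {p : St} (h : theA.FinRun l p) : endSt l = p := by
  induction h with
  | nil => rfl
  | snoc h1 h2 ih => simp [endSt, List.getLast?_append]

def resolver0 : BuchiAutomaton.Resolver theA where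
  res := resFun
  res_valid := by
    intro l p a h
    have he := endSt_finrun h
    exact ⟨by rw [resFun_fst, he], resFun_snd l a, resFun_mem l a⟩

/-- the history list built by the resolver -/
lemma resolver0_hist (w : ℕ → Al) : ∀ n, resolver0.hist w n =
    (resolver0.hist w n) := fun _ => rfl

def rho (w : ℕ → Al) (n : ℕ) : St := endSt (resolver0.hist w n)

lemma hist_succ (w : ℕ → Al) (n : ℕ) :
    resolver0.hist w (n+1) = resolver0.hist w n ++ [resFun (resolver0.hist w n) (w n)] := rfl

lemma rho_succ (w : ℕ → Al) (n : ℕ) :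
    rho w (n+1) = (resFun (resolver0.hist w n) (w n)).2.2 := by
  unfold rho
  rw [hist_succ]
  simp [endSt, List.getLast?_append]

lemma rho_zero (w : ℕ → Al) : rho w 0 = .W := rfl

lemma resFun_eq_triple (w : ℕ → Al) (n : ℕ) :
    resFun (resolver0.hist w n) (w n) = (rho w n, w n, rho w (n+1)) := by
  rw [rho_succ]
  have h1 : (resFun (resolver0.hist w n) (w n)).1 = rho w n := resFun_fst _ _
  have h2 : (resFun (resolver0.hist w n) (w n)).2.1 = w n := resFun_snd _ _
  exact Prod.ext h1 (Prod.ext h2 rfl)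

lemma rho_run (w : ℕ → Al) : ∀ n, (rho w n, w n, rho w (n+1)) ∈ Atrans := by
  intro n
  rw [← resFun_eq_triple]
  exact resFun_mem _ _

/-- letters of the history -/
lemma hist_letters (w : ℕ → Al) : ∀ n, (resolver0.hist w n).map (·.2.1) = wordSegment w 0 n := by
  intro n
  induction n with
  | zero => rfl
  | succ n ih =>
    rw [hist_succ, List.map_append, ih]
    have : wordSegment w 0 (n+1) = wordSegment w 0 n ++ [w n] := by
      unfold wordSegment
      simp [List.range_succ]
    rw [this]
    simp [resFun_snd]

/-- the label register -/
def lbl (w : ℕ → Al) : ℕ → Fin 6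
  | 0 => 0
  | n+1 => (evt w n).getD (lbl w n)

lemma gc_fold (w : ℕ → Al) : ∀ n, (wordSegment w 0 n).foldl gcA (.P, 0) = (trk w n, lbl w n) := by
  intro n
  induction n with
  | zero => rfl
  | succ n ih =>
    have hseg : wordSegment w 0 (n+1) = wordSegment w 0 n ++ [w n] := by
      unfold wordSegment; simp [List.range_succ]
    rw [hseg, List.foldl_append, ih]
    show gcA (trk w n, lbl w n) (w n) = (trk w (n+1), lbl w (n+1))
    have hl : lbl w (n+1) = (evt w n).getD (lbl w n) := rfl
    rw [trk_succ, hl]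
    unfold gcA evt
    cases hw : w n <;> simp <;> split <;> simp_all

lemma gc_eq_lbl (w : ℕ → Al) (n : ℕ) : gc (wordSegment w 0 n) = lbl w n := by
  unfold gc; rw [gc_fold]

/-- lbl equals the label of the last event -/
lemma lbl_last_event {e n : ℕ} {d : Fin 6} (he : evt w e = some d) (hen : e < n)
    (hafter : ∀ i, e < i → i < n → evt w i = none) : lbl w n = d := by
  induction n with
  | zero => omega
  | succ n ih =>
    rcases Nat.lt_or_ge e n with hl | hg
    · have : lbl w n = d := ih hl (fun i h1 h2 => hafter i h1 (by omega))
      show (evt w n).getD (lbl w n) = d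
      rw [hafter n hl (by omega), this]; rfl
    · have : e = n := by omega
      subst this
      show (evt w e).getD (lbl w e) = d
      rw [he]; rfl

/-- sig characterization for the induced run -/
lemma rho_sig_iff (w : ℕ → Al) (n : ℕ) :
    (rho w n, w n, rho w (n+1)) ∈ Asig ↔ (rho w n = .W ∧ w n = .y) := by
  constructor
  · intro h; exact ⟨h.1, h.2.1⟩
  · intro ⟨h1, h2⟩
    refine ⟨h1, h2, ?_⟩
    rw [← resFun_eq_triple]
    show ∃ γ, (resFun (resolver0.hist w n) (w n)).2.2 = .M .P γ false
    unfold resFun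
    rw [if_pos (⟨(by rw [← h1]; rfl), h2⟩ : endSt (resolver0.hist w n) = .W ∧ w n = .y)]
    exact ⟨_, rfl⟩

/-- value of the register chosen at a reset -/
lemma rho_reset (w : ℕ → Al) {n : ℕ} (h1 : rho w n = .W) (h2 : w n = .y) :
    rho w (n+1) = .M .P (lbl w n) false := by
  rw [rho_succ]
  unfold resFun
  rw [if_pos (⟨(by rw [← h1]; rfl), h2⟩ : endSt (resolver0.hist w n) = .W ∧ w n = .y)]
  show (St.M .P (gc ((resolver0.hist w n).map (·.2.1))) false) = _
  rw [hist_letters, gc_eq_lbl]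

/-- generic last-witness lemma -/
lemma lastP (P : ℕ → Prop) [DecidablePred P] :
    ∀ b a, (∃ i, a ≤ i ∧ i < b ∧ P i) → ∃ e, a ≤ e ∧ e < b ∧ P e ∧ ∀ i, e < i → i < b → ¬ P i := by
  intro b
  induction b with
  | zero => intro a ⟨i, _, h, _⟩; omega
  | succ b ih =>
    intro a ⟨i, hai, hib, hPi⟩
    by_cases hb : P b
    · exact ⟨b, by omega, by omega, hb, fun j h1 h2 => by omega⟩
    · have : ∃ i, a ≤ i ∧ i < b ∧ P i := by
        refine ⟨i, hai, ?_, hPi⟩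
        rcases Nat.lt_or_ge i b with h | h
        · exact h
        · have : i = b := by omega
          subst this; exact absurd hPi hb
      obtain ⟨e, h1, h2, h3, h4⟩ := ih a this
      refine ⟨e, h1, by omega, h3, fun j hj1 hj2 => ?_⟩
      rcases Nat.lt_or_ge j b with h | h
      · exact h4 j hj1 h
      · have : j = b := by omega
        subst this; exact hb
/-! ### segments -/

lemma seg_len (m n : ℕ) : (wordSegment w m n).length = n - m := by simp [wordSegment]

lemma seg_get {m n i : ℕ} (h : i < n - m) :
    (wordSegment w m n)[i]'(by simpa [wordSegment] using h) = w (m+i) := by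
  simp [wordSegment]

lemma seg_singleton (j : ℕ) : wordSegment w j (j+1) = [w j] := by
  unfold wordSegment
  simp [List.range_succ]

lemma seg_snoc {m n : ℕ} (h : m ≤ n) : wordSegment w m (n+1) = wordSegment w m n ++ [w n] := by
  unfold wordSegment
  have h1 : n + 1 - m = (n - m) + 1 := by omega
  rw [h1, List.range_succ, List.map_append]
  have h2 : m + (n - m) = n := by omega
  simp [h2]

lemma seg_append {m k : ℕ} (h1 : m ≤ k) : ∀ {n : ℕ}, k ≤ n →
    wordSegment w m n = wordSegment w m k ++ wordSegment w k n := by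
  intro n
  induction n with
  | zero =>
    intro h2
    have hk : k = 0 := by omega
    have hm : m = 0 := by omega
    subst hk; subst hm; rfl
  | succ n ih =>
    intro h2
    rcases Nat.lt_or_ge k (n+1) with hl | hg
    · have hkn : k ≤ n := by omega
      have hmn : m ≤ n := by omega
      rw [seg_snoc hmn, ih hkn, seg_snoc hkn, List.append_assoc]
    · have hk : k = n + 1 := by omega
      have hnil : wordSegment w k k = [] := by unfold wordSegment; simp
      rw [← hk, hnil, List.append_nil]

lemma seg_split {m n : ℕ} {X Y : List Al} (hmn : m ≤ n) (h : wordSegment w m n = X ++ Y) :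
    wordSegment w m (m + X.length) = X ∧ wordSegment w (m + X.length) n = Y ∧
      m + X.length ≤ n := by
  have hlen : n - m = X.length + Y.length := by
    rw [← seg_len (w := w) m n, h, List.length_append]
  have hle : m + X.length ≤ n := by omega
  have hsplit := seg_append (w := w) (by omega : m ≤ m + X.length) hle
  rw [h] at hsplit
  have hlx : (wordSegment w m (m + X.length)).length = X.length := by
    rw [seg_len]; omega
  obtain ⟨e1, e2⟩ := List.append_inj hsplit hlx.symm
  exact ⟨e1.symm, e2.symm, hle⟩

lemma clRun_append : ∀ (u v : List Al) (s : CSt),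
    clRun s (u ++ v) = match clRun s u with
      | some s' => clRun s' v
      | none => none := by
  intro u
  induction u with
  | nil => intro v s; rfl
  | cons l u ih =>
    intro v s
    show clRun s (l :: (u ++ v)) = _
    have h1 : clRun s (l :: (u ++ v)) =
        match clStep s l with | some c' => clRun c' (u ++ v) | none => none := rfl
    have h2 : clRun s (l :: u) =
        match clStep s l with | some c' => clRun c' u | none => none := rfl
    rw [h1, h2]
    cases hs : clStep s l with
    | none => rfl
    | some s' => exact ih v s'

lemma prf_eq_clRun (m : ℕ) : ∀ k, prf w m k = clRun .p (wordSegment w m (m+k)) := by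
  intro k
  induction k with
  | zero =>
    unfold wordSegment
    simp [prf, clRun]
  | succ k ih =>
    have : wordSegment w m (m+(k+1)) = wordSegment w m (m+k) ++ [w (m+k)] := by
      have h1 : m + (k+1) = (m+k) + 1 := by omega
      rw [h1, seg_snoc (by omega)]
    rw [this, clRun_append, prf_succ, ih]
    cases hs : clRun CSt.p (wordSegment w m (m+k)) with
    | none => rfl
    | some s' =>
      show (some s').bind (fun s => clStep s (w (m+k))) = _
      rw [Option.bind_some]
      unfold clRun
      cases hc : clStep s' (w (m+k)) <;> simp [hc, clRun]

lemma Lcl_prf {m n : ℕ} {α : Fin 6} (h : m ≤ n) :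
    wordSegment w m n ∈ Lcl α ↔ prf w m (n - m) = some (.ell α) := by
  have h1 : m + (n - m) = n := by omega
  rw [Lcl, Set.mem_setOf_eq, prf_eq_clRun m (n-m), h1]

lemma Lcl_ne {α : Fin 6} : ([] : List Al) ∉ Lcl α := by
  simp [Lcl, clRun]

lemma Lcl_len_pos {m n : ℕ} {α : Fin 6} (h : wordSegment w m n ∈ Lcl α) : m < n := by
  rcases Nat.lt_or_ge m n with h1 | h1
  · exact h1
  · exfalso
    have : wordSegment w m n = [] := by
      unfold wordSegment
      have : n - m = 0 := by omega
      simp [this]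
    rw [this] at h
    exact Lcl_ne h

/-! ### occurrences and the characterization of LMain -/

def Occ (w : ℕ → Al) (m n : ℕ) : Prop :=
  ∃ α β : Fin 6, α ≠ β ∧ ∃ j₁ j₂ : ℕ, m < j₁ ∧ j₁ < j₂ ∧ j₂ < n ∧
    (wordSegment w m j₁ ∈ Lcl α ∨ (j₁ = m + 1 ∧ w m = .res α)) ∧
    wordSegment w j₁ j₂ ∈ Lcl β ∧ wordSegment w j₂ n ∈ Lcl β

def CharW (w : ℕ → Al) : Prop :=
  (∀ N, ∃ j, N ≤ j ∧ w j = .y) ∧ (∀ N, ∃ m n, N ≤ m ∧ Occ w m n)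

def Xset : Set (List Al) :=
  {v | ∃ α β : Fin 6, α ≠ β ∧ ∃ u v₁ v₂ v₃ z : List Al,
    (v₁ ∈ Lcl α ∨ v₁ = [Al.res α]) ∧ v₂ ∈ Lcl β ∧ v₃ ∈ Lcl β ∧
    v = u ++ v₁ ++ v₂ ++ v₃ ++ z ++ [Al.y]}

lemma LMain_eq : LMain = omegaPow Xset := rfl

lemma char_of_LMain {w : ℕ → Al} (h : w ∈ LMain) : CharW w := by
  rw [LMain_eq] at h
  obtain ⟨φ, hφ0, hmono, hblock⟩ := h
  have hNle : ∀ N, N ≤ φ N := fun N => hmono.le_apply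
  constructor
  · -- infinitely many y
    intro N
    obtain ⟨α, β, hne, u, v₁, v₂, v₃, z, hv₁, hv₂, hv₃, heq⟩ := hblock N
    set C : List Al := u ++ v₁ ++ v₂ ++ v₃ ++ z with hC
    have heq' : wordSegment w (φ N) (φ (N+1)) = C ++ [Al.y] := heq
    have hle : φ N ≤ φ (N+1) := le_of_lt (hmono (by omega))
    obtain ⟨e1, e2, e3⟩ := seg_split hle heq'
    have hNle' := hNle N
    refine ⟨φ N + C.length, by omega, ?_⟩
    have hlen0 := seg_len (w := w) (φ N + C.length) (φ (N+1))
    rw [e2] at hlen0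
    simp at hlen0
    have hx : φ (N+1) = (φ N + C.length) + 1 := by omega
    rw [hx, seg_singleton] at e2
    exact (List.cons.injEq _ _ _ _ ▸ e2).1
  · -- occurrences start arbitrarily late
    intro N
    obtain ⟨α, β, hne, u, v₁, v₂, v₃, z, hv₁, hv₂, hv₃, heq⟩ := hblock N
    have heq' : wordSegment w (φ N) (φ (N+1)) =
        u ++ (v₁ ++ (v₂ ++ (v₃ ++ (z ++ [Al.y])))) := by
      rw [heq]; simp [List.append_assoc]
    have hle : φ N ≤ φ (N+1) := le_of_lt (hmono (by omega))
    obtain ⟨e1, e2, e3⟩ := seg_split hle heq'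
    set c1 := φ N + u.length with hc1
    obtain ⟨f1, f2, f3⟩ := seg_split e3 e2
    set c2 := c1 + v₁.length with hc2
    obtain ⟨g1, g2, g3⟩ := seg_split f3 f2
    set c3 := c2 + v₂.length with hc3
    obtain ⟨k1, k2, k3⟩ := seg_split g3 g2
    set c4 := c3 + v₃.length with hc4
    have hNle' := hNle N
    refine ⟨c1, c4, by omega, α, β, hne, c2, c3, ?_, ?_, ?_, ?_, ?_, ?_⟩
    · -- c1 < c2
      rcases hv₁ with h | h
      · have := Lcl_len_pos (f1 ▸ h : wordSegment w c1 c2 ∈ Lcl α)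
        exact this
      · rw [h] at hc2; simp at hc2; omega
    · exact Lcl_len_pos (g1 ▸ hv₂ : wordSegment w c2 c3 ∈ Lcl β)
    · exact Lcl_len_pos (k1 ▸ hv₃ : wordSegment w c3 c4 ∈ Lcl β)
    · rcases hv₁ with h | h
      · exact Or.inl (f1 ▸ h)
      · refine Or.inr ⟨by rw [h] at hc2; simpa using hc2, ?_⟩
        have hseg : wordSegment w c1 c2 = [Al.res α] := by rw [f1, h]
        have hx : c2 = c1 + 1 := by rw [hc2, h]; rfl
        rw [hx, seg_singleton] at hseg
        exact (List.cons.injEq _ _ _ _ ▸ hseg).1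
    · exact g1 ▸ hv₂
    · exact k1 ▸ hv₃

lemma LMain_of_char {w : ℕ → Al} (h : CharW w) : w ∈ LMain := by
  obtain ⟨hy, hocc⟩ := h
  have hstep : ∀ P : ℕ, ∃ P', P < P' ∧ wordSegment w P P' ∈ Xset := by
    intro P
    obtain ⟨m, n, hPm, α, β, hne, j₁, j₂, h1, h2, h3, hv₁, hv₂, hv₃⟩ := hocc P
    obtain ⟨j, hnj, hjy⟩ := hy n
    refine ⟨j + 1, by omega, ?_⟩
    refine ⟨α, β, hne, wordSegment w P m, wordSegment w m j₁, wordSegment w j₁ j₂,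
      wordSegment w j₂ n, wordSegment w n j, ?_, hv₂, hv₃, ?_⟩
    · rcases hv₁ with h | ⟨hj₁, hres⟩
      · exact Or.inl h
      · right
        rw [hj₁, seg_singleton, hres]
    · have hyseg : wordSegment w j (j+1) = [Al.y] := by rw [seg_singleton, hjy]
      rw [← hyseg]
      simp only [List.append_assoc]
      rw [← seg_append (by omega : n ≤ j) (by omega : j ≤ j + 1)]
      rw [← seg_append (by omega : j₂ ≤ n) (by omega : n ≤ j + 1)]
      rw [← seg_append (by omega : j₁ ≤ j₂) (by omega : j₂ ≤ j + 1)]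
      rw [← seg_append (by omega : m ≤ j₁) (by omega : j₁ ≤ j + 1)]
      rw [← seg_append (by omega : P ≤ m) (by omega : m ≤ j + 1)]
  classical
  choose g hg1 hg2 using hstep
  refine ⟨fun k => Nat.rec 0 (fun _ ih => g ih) k, rfl, ?_, ?_⟩
  · apply strictMono_nat_of_lt_succ
    intro k
    exact hg1 _
  · intro k
    exact hg2 _
/-! ### rejection: words satisfying CharW make every run see infinitely many sigs -/

lemma reject {w : ℕ → Al} {ρ : ℕ → St} (hρ : ∀ i, (ρ i, w i, ρ (i+1)) ∈ Atrans)
    (h0 : ρ 0 = .W) (hch : CharW w) :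
    ∀ N, ∃ j, N ≤ j ∧ (ρ j, w j, ρ (j+1)) ∈ Asig := by
  intro N
  obtain ⟨m, n, hNm, α, β, hne, j₁, j₂, h1, h2, h3, hv₁, hv₂, hv₃⟩ := hch.2 N
  have hj1 : j₁ - 1 + 1 = j₁ := by omega
  -- event at j₁ - 1 with label α
  have hev1 : evt w (j₁ - 1) = some α := by
    rcases hv₁ with h | ⟨hj, hres⟩
    · have hp := (Lcl_prf (le_of_lt h1)).mp h
      have hk : j₁ - m = (j₁ - m - 1) + 1 := by omega
      rw [hk] at hp
      have hc := (completion_evt hp).1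
      have harith : m + (j₁ - m - 1) = j₁ - 1 := by omega
      rwa [harith] at hc
    · have : j₁ - 1 = m := by omega
      rw [this]
      exact evt_some_res hres
  have hWex : ∃ i, j₁ - 1 ≤ i ∧ i ≤ n ∧ ρ i = .W := by
    by_contra hW
    push_neg at hW
    -- ρ (j₁ - 1) is in monitor form
    rcases runform hρ h0 (j₁ - 1) with h | ⟨γ₀, f₀, hM⟩
    · exact hW _ (le_refl _) (by omega) h
    · have he := evstep hρ hM hev1
      rw [hj1] at he
      have hρj₁ : ∃ f₁, ρ j₁ = .M .P α f₁ := by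
        rcases he with ⟨_, _, hd | hd⟩ | ⟨_, hd⟩
        · exact absurd hd.2.2 (hW j₁ (by omega) (by omega))
        · exact ⟨_, hd.2⟩
        · exact ⟨_, hd⟩
      obtain ⟨f₁, hρj₁⟩ := hρj₁
      have htrk₁ : trk w j₁ = .P := by
        have := evt_trk_P hev1; rwa [hj1] at this
      have hp₂ := (Lcl_prf (le_of_lt h2)).mp hv₂
      have hv2f := vrun_fwd htrk₁ hp₂
      have hptr : j₁ + (j₂ - j₁ - 1) = j₂ - 1 := by omega
      have hnum2 := hv2f.2.2.1
      have htr2 := hv2f.2.2.2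
      rw [hptr] at hnum2 htr2
      have hev2 : evt w (j₂ - 1) = some β := evt_some_num hnum2 htr2
      have hsp : ρ (j₂ - 1) = .M (trk w (j₂ - 1)) α f₁ := by
        apply span hρ (a := j₁) (by omega) (by rw [hρj₁, htrk₁])
        intro i hi1 hi2
        have := hv2f.2.1 (i - j₁) (by omega)
        have harith : j₁ + (i - j₁) = i := by omega
        rwa [harith] at this
      have hj2 : j₂ - 1 + 1 = j₂ := by omega
      have he2 := evstep hρ hsp hev2
      rw [hj2] at he2
      have hρj₂ : ρ j₂ = .M .P β true := by
        rcases he2 with ⟨_, _, hd | hd⟩ | ⟨hres, _⟩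
        · exact absurd hd.2.2 (hW j₂ (by omega) (by omega))
        · have : decide (α ≠ β) = true := by simp [hne]
          rw [hd.2, this]
        · rw [hnum2] at hres; cases hres
      have htrk₂ : trk w j₂ = .P := by
        have := evt_trk_P hev2; rwa [hj2] at this
      have hp₃ := (Lcl_prf (le_of_lt h3)).mp hv₃
      have hv3f := vrun_fwd htrk₂ hp₃
      have hptr3 : j₂ + (n - j₂ - 1) = n - 1 := by omega
      have hnum3 := hv3f.2.2.1
      have htr3 := hv3f.2.2.2
      rw [hptr3] at hnum3 htr3
      have hev3 : evt w (n - 1) = some β := evt_some_num hnum3 htr3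
      have hsp3 : ρ (n - 1) = .M (trk w (n - 1)) β true := by
        apply span hρ (a := j₂) (by omega) (by rw [hρj₂, htrk₂])
        intro i hi1 hi2
        have := hv3f.2.1 (i - j₂) (by omega)
        have harith : j₂ + (i - j₂) = i := by omega
        rwa [harith] at this
      have hn1 : n - 1 + 1 = n := by omega
      have he3 := evstep hρ hsp3 hev3
      rw [hn1] at he3
      rcases he3 with ⟨_, _, hd | hd⟩ | ⟨hres, _⟩
      · exact hW n (by omega) (le_refl _) hd.2.2
      · exact hd.1 ⟨rfl, rfl⟩
      · rw [hnum3] at hres; cases hres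
  obtain ⟨i, hi1, hi2, hiW⟩ := hWex
  -- least y at or after i
  have hyex : ∃ j, i ≤ j ∧ w j = .y := hch.1 i
  classical
  set j0 := Nat.find hyex with hj0
  have hspec := Nat.find_spec hyex
  have hmin := fun {k} (hk : k < j0) => Nat.find_min hyex hk
  have hWj0 : ρ j0 = .W := by
    apply wstay hρ hspec.1 hiW
    intro l hl1 hl2 hly
    exact hmin hl2 ⟨hl1, hly⟩
  refine ⟨j0, by omega, ?_⟩
  rcases rstep hρ j0 with ⟨hW', hy', γ, hn'⟩ | ⟨hne', _⟩
  · exact ⟨hW', hy', γ, hn'⟩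
  · exact absurd ⟨hWj0, hspec.2⟩ hne'
/-! ### acceptance: the resolver run has finitely many sigs outside CharW -/

lemma accept {w : ℕ → Al} (hnch : ¬ CharW w) :
    ∃ N, ∀ k, N ≤ k → (rho w k, w k, rho w (k+1)) ∉ Asig := by
  classical
  unfold CharW at hnch
  rw [not_and_or] at hnch
  rcases hnch with hy | hocc
  · push_neg at hy
    obtain ⟨N, hN⟩ := hy
    exact ⟨N, fun k hk hs => hN k hk ((rho_sig_iff w k).mp hs).2⟩
  · push_neg at hocc
    obtain ⟨N₀, hN₀⟩ := hocc
    by_contra hc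
    push_neg at hc
    have hρ := rho_run w
    obtain ⟨s, hs1, hs2⟩ := hc N₀
    obtain ⟨hsW, hsy⟩ := (rho_sig_iff w s).mp hs2
    -- next sig after s
    have hQ1 : ∃ k, s+1 ≤ k ∧ (rho w k, w k, rho w (k+1)) ∈ Asig := hc (s+1)
    set s' := Nat.find hQ1 with hs'def
    obtain ⟨hs'ge, hs'sig⟩ := Nat.find_spec hQ1
    obtain ⟨hs'W, hs'y⟩ := (rho_sig_iff w s').mp hs'sig
    -- next sig after s'
    have hQ2 : ∃ k, s'+1 ≤ k ∧ (rho w k, w k, rho w (k+1)) ∈ Asig := hc (s'+1)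
    set s'' := Nat.find hQ2 with hs''def
    obtain ⟨hs''ge, hs''sig⟩ := Nat.find_spec hQ2
    obtain ⟨hs''W, _⟩ := (rho_sig_iff w s'').mp hs''sig
    -- resets
    have hreset0 : rho w (s+1) = .M .P (lbl w s) false := rho_reset w hsW hsy
    have hreset : rho w (s'+1) = .M .P (lbl w s') false := rho_reset w hs'W hs'y
    have htrkS' : trk w (s'+1) = .P := by rw [trk_succ, hs'y, tstep_y]
    have hresetM : rho w (s'+1) = .M (trk w (s'+1)) (lbl w s') false := by
      rw [hreset, htrkS']
    -- an event eh strictly between s and s'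
    obtain ⟨eh, heh1, heh2, heh3, heh4⟩ :=
      firstW (hab := hs'ge) (by rw [hreset0]; simp) hs'W
    have hehne : rho w eh ≠ .W := heh4 eh heh1 (le_refl _)
    obtain ⟨gh, fh, hMh⟩ := (runform hρ (rho_zero w) eh).resolve_left hehne
    obtain ⟨hehnum, hehtrig, -⟩ := decl hρ hMh heh3
    have hehevt : evt w eh = some gh := evt_some_num hehnum hehtrig
    -- the first W-entry e₂ after s'+1, a declare
    obtain ⟨e₂, he₂1, he₂2, he₂3, he₂4⟩ :=
      firstW (hab := hs''ge) (by rw [hreset]; simp) hs''W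
    have he₂ne : rho w e₂ ≠ .W := he₂4 e₂ he₂1 (le_refl _)
    obtain ⟨γ₂, f₂, hM₂⟩ := (runform hρ (rho_zero w) e₂).resolve_left he₂ne
    obtain ⟨hd₂num, hd₂trig, hd₂f⟩ := decl hρ hM₂ he₂3
    -- the last event e₁ before e₂, at or after s'+1
    have hev_ex : ∃ i, s'+1 ≤ i ∧ i < e₂ ∧ evt w i ≠ none := by
      by_contra hno
      push_neg at hno
      have hsp := span hρ he₂1 hresetM (fun i h1 h2 => hno i h1 h2)
      rw [hM₂] at hsp
      simp only [St.M.injEq] at hsp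
      rw [hd₂f] at hsp
      exact absurd hsp.2.2 (by simp)
    obtain ⟨e₁, he₁1, he₁2, he₁3, he₁4⟩ := lastP (fun i => evt w i ≠ none) e₂ (s'+1) hev_ex
    have he₁after : ∀ i, e₁ < i → i < e₂ → evt w i = none := by
      intro i h1 h2
      have := he₁4 i h1 h2
      simpa using this
    obtain ⟨d₁, hd₁⟩ := Option.ne_none_iff_exists'.mp he₁3
    -- the last event e₀ before e₁ (over all positions)
    obtain ⟨e₀, -, he₀2, he₀3, he₀4⟩ := lastP (fun i => evt w i ≠ none) e₁ 0
      ⟨eh, by omega, by omega, by show evt w eh ≠ none; rw [hehevt]; simp⟩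
    have he₀after : ∀ i, e₀ < i → i < e₁ → evt w i = none := by
      intro i h1 h2
      have := he₀4 i h1 h2
      simpa using this
    obtain ⟨d₀, hd₀⟩ := Option.ne_none_iff_exists'.mp he₀3
    have he₀eh : eh ≤ e₀ := by
      by_contra h
      push_neg at h
      exact he₀4 eh h (by omega) (by show evt w eh ≠ none; rw [hehevt]; simp)
    have he₀s : s < e₀ := by omega
    -- register at e₁
    have hρe₁ex : ∃ fx : Bool, rho w e₁ = .M (trk w e₁) d₀ fx := by
      rcases Nat.lt_or_ge e₀ (s'+1) with hcaseB | hcaseA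
      · have he₀s' : e₀ < s' := by
          rcases Nat.lt_or_ge e₀ s' with h | h
          · exact h
          · exfalso
            have : e₀ = s' := by omega
            rw [this, evt_none_of_other (by simp [hs'y]) (by simp [hs'y])] at hd₀
            cases hd₀
        have hlbl : lbl w s' = d₀ :=
          lbl_last_event hd₀ he₀s' (fun i h1 h2 => he₀after i h1 (by omega))
        refine ⟨false, ?_⟩
        have := span hρ he₁1 hresetM (fun i hi1 hi2 => he₀after i (by omega) hi2)
        rwa [hlbl] at this
      · have hρe₀ : rho w e₀ ≠ .W := he₂4 e₀ hcaseA (by omega)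
        obtain ⟨γ', f', hM'⟩ := (runform hρ (rho_zero w) e₀).resolve_left hρe₀
        have he0 := evstep hρ hM' hd₀
        have hnW : rho w (e₀+1) ≠ .W := he₂4 (e₀+1) (by omega) (by omega)
        have hstep : ∃ f₁' : Bool, rho w (e₀+1) = .M .P d₀ f₁' := by
          rcases he0 with ⟨-, -, hd | hd⟩ | ⟨-, hd⟩
          · exact absurd hd.2.2 hnW
          · exact ⟨_, hd.2⟩
          · exact ⟨_, hd⟩
        obtain ⟨f₁', hstep⟩ := hstep
        have htrkE : trk w (e₀+1) = .P := evt_trk_P hd₀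
        exact ⟨f₁', span hρ (a := e₀+1) (by omega) (by rw [hstep, htrkE])
          (fun i hi1 hi2 => he₀after i (by omega) hi2)⟩
    obtain ⟨fx, hρe₁⟩ := hρe₁ex
    -- event step at e₁
    have he1 := evstep hρ hρe₁ hd₁
    have hnW1 : rho w (e₁+1) ≠ .W := he₂4 (e₁+1) (by omega) (by omega)
    have htrkE1 : trk w (e₁+1) = .P := evt_trk_P hd₁
    have hspan12 : ∀ f'' : Bool, rho w (e₁+1) = .M .P d₁ f'' →
        rho w e₂ = .M (trk w e₂) d₁ f'' := by
      intro f'' h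
      exact span hρ (a := e₁+1) (by omega) (by rw [h, htrkE1])
        (fun i hi1 hi2 => he₁after i (by omega) hi2)
    have hkey : w e₁ = .num d₁ ∧ trig (trk w e₁) d₁ = true ∧ d₀ ≠ d₁ ∧ γ₂ = d₁ := by
      rcases he1 with ⟨hnum1, htrig1, hd | hd⟩ | ⟨-, hd⟩
      · exact absurd hd.2.2 hnW1
      · have he₂M := hspan12 _ hd.2
        rw [hM₂] at he₂M
        simp only [St.M.injEq] at he₂M
        have hdec : decide (d₀ ≠ d₁) = true := by rw [← he₂M.2.2, hd₂f]
        exact ⟨hnum1, htrig1, by simpa using hdec, he₂M.2.1⟩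
      · have he₂M := hspan12 _ hd
        rw [hM₂] at he₂M
        simp only [St.M.injEq] at he₂M
        rw [hd₂f] at he₂M
        exact absurd he₂M.2.2 (by simp)
    obtain ⟨hnum1, htrig1, hd01, hγ₂d₁⟩ := hkey
    -- the three classifier pieces
    have harith1 : e₀+1+(e₁-e₀-1) = e₁ := by omega
    have hprf2 : prf w (e₀+1) (e₁ - e₀) = some (.ell d₁) := by
      apply vrun_bwd (evt_trk_P hd₀) (by omega)
      · intro j hj
        exact he₀after (e₀+1+j) (by omega) (by omega)
      · have h' : e₀+1+(e₁-e₀-1) = e₁ := harith1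
        rw [h']; exact hnum1
      · rw [harith1]; exact htrig1
    have hnum2 : w e₂ = .num d₁ := by rw [hd₂num, hγ₂d₁]
    have htrig2 : trig (trk w e₂) d₁ = true := by rw [← hγ₂d₁]; exact hd₂trig
    have harith2 : e₁+1+(e₂-e₁-1) = e₂ := by omega
    have hprf3 : prf w (e₁+1) (e₂ - e₁) = some (.ell d₁) := by
      apply vrun_bwd htrkE1 (by omega)
      · intro j hj
        exact he₁after (e₁+1+j) (by omega) (by omega)
      · rw [harith2]; exact hnum2
      · rw [harith2]; exact htrig2
    -- the occurrence
    have hoccex : ∃ mm nn, s < mm ∧ Occ w mm nn := by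
      have hseg2 : wordSegment w (e₀+1) (e₁+1) ∈ Lcl d₁ := by
        rw [Lcl_prf (by omega)]
        have h' : e₁+1-(e₀+1) = e₁ - e₀ := by omega
        rw [h']; exact hprf2
      have hseg3 : wordSegment w (e₁+1) (e₂+1) ∈ Lcl d₁ := by
        rw [Lcl_prf (by omega)]
        have h' : e₂+1-(e₁+1) = e₂ - e₁ := by omega
        rw [h']; exact hprf3
      cases hw0 : w e₀ with
      | res d₀' =>
        have hdd : d₀' = d₀ := by rw [evt_some_res hw0] at hd₀; simpa using hd₀
        subst hdd
        exact ⟨e₀, e₂+1, he₀s, d₀', d₁, hd01, e₀+1, e₁+1, by omega, by omega, by omega,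
          Or.inr ⟨rfl, hw0⟩, hseg2, hseg3⟩
      | num d₀' =>
        have ht : trig (trk w e₀) d₀' = true := by
          by_contra ht
          rw [evt_none_num hw0 ht] at hd₀; cases hd₀
        have hdd : d₀' = d₀ := by rw [evt_some_num hw0 ht] at hd₀; simpa using hd₀
        subst hdd
        obtain ⟨mm, hmm1, hmm2, hmm3⟩ := canon w e₀
        have hms : s < mm := hmm3 s (by omega) (by rw [hsy]; rfl)
        have hprf1 : prf w mm (e₀ - mm + 1) = some (.ell d₀') := by
          rw [prf_succ, hmm2, Option.bind_some]
          have h' : mm + (e₀ - mm) = e₀ := by omega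
          rw [h', hw0, clStep_num, if_pos ht]
        refine ⟨mm, e₂+1, hms, d₀', d₁, hd01, e₀+1, e₁+1, by omega, by omega, by omega,
          ?_, hseg2, hseg3⟩
        left
        rw [Lcl_prf (by omega)]
        have h' : e₀+1-mm = e₀ - mm + 1 := by omega
        rw [h']; exact hprf1
      | y => rw [evt_none_of_other (by simp [hw0]) (by simp [hw0])] at hd₀; cases hd₀
      | a => rw [evt_none_of_other (by simp [hw0]) (by simp [hw0])] at hd₀; cases hd₀
      | b => rw [evt_none_of_other (by simp [hw0]) (by simp [hw0])] at hd₀; cases hd₀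
      | c => rw [evt_none_of_other (by simp [hw0]) (by simp [hw0])] at hd₀; cases hd₀
    obtain ⟨mm, nn, hmm, hOcc⟩ := hoccex
    exact hN₀ mm nn (by omega) hOcc
/-! ### assembly -/

lemma colang_eq : theA.CoLang = LMainᶜ := by
  ext w
  constructor
  · rintro ⟨ρ, ⟨h0, hr⟩, N, hN⟩ hw
    obtain ⟨j, hj1, hj2⟩ := reject hr h0 (char_of_LMain hw) N
    exact hN j hj1 hj2
  · intro hw
    exact ⟨rho w, ⟨rho_zero w, rho_run w⟩, accept (fun hch => hw (LMain_of_char hch))⟩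

lemma cohd : theA.CoHistoryDeterministic := by
  refine ⟨resolver0, ?_⟩
  intro w hw
  have hw' : w ∉ LMain := by
    have := colang_eq ▸ hw
    exact this
  obtain ⟨N, hN⟩ := accept (w := w) (fun hch => hw' (LMain_of_char hch))
  refine ⟨N, fun n hn => ?_⟩
  have heq : resolver0.res (resolver0.hist w n) (w n) = (rho w n, w n, rho w (n+1)) :=
    resFun_eq_triple w n
  rw [heq]
  exact hN n hn
/-- There is a history-deterministic coBüchi automaton with 61
states recognising the complement of `L_main`. -/
theorem exists_hd_cobuchi_61_states_for_compl_LMain :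
    ∃ (Q : Type) (iQ : Fintype Q) (A : BuchiAutomaton Al Q),
      @Fintype.card Q iQ = 61 ∧ A.CoHistoryDeterministic ∧ A.CoLang = LMainᶜ := by
  exact ⟨St, inferInstance, theA, card_St, cohd, colang_eq⟩
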